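/- Let 𝒞 be a variety of L-algebras, A ∈ 𝒞, B a subalgebra of A, W a term in a set S of variables, and x = (x_s)_{s∈S} an S-tuple of elements of A. Suppose there are a subset T ⊆ S and terms W′ (in one distinguished variable together with the variables of S ∖ T) and W″ (in the variables of T) such that W(x) = W′(W″((x_s)_{s∈T}), (x_s)_{s∈S∖T}) as a composite of terms, and suppose that W″ evaluated in A at the T-tuple (x_s)_{s∈T} gives an element of B. Then T is transferable over B with respect to W(x). -/
import Mathlib


open FirstOrder Language

universe u v w x

open Classical in
/-- Transferability of a set of variables. -/
def Transferable {L : FirstOrder.Language.{u, v}} (T : L.Theory) {A : Type w} [L.Structure A]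
    (B : L.Substructure A) {S : Type x} (W : L.Term S) (xs : S → A) (t : Set S) : Prop :=
  ∀ S₁ S₂ : Set S, Disjoint S₁ t → Disjoint S₁ S₂ → Disjoint t S₂ →
    S₁ ∪ t ∪ S₂ = Set.univ →
    ∀ (C : Type (max u v w)) [L.Structure C] [T.Model C], ∀ f g : A →[L] C,
      (∀ b ∈ B, f b = g b) →
      Term.realize (fun s => if s ∈ S₁ ∪ t then f (xs s) else g (xs s)) W =
      Term.realize (fun s => if s ∈ S₁ then f (xs s) else g (xs s)) W

/-- The dominion of a subalgebra `B` of `A` in the variety of models of `T`. -/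
def Dominion {L : FirstOrder.Language.{u, v}} (T : L.Theory) {A : Type w} [L.Structure A]
    (B : L.Substructure A) : Set A :=
  {a : A | ∀ (C : Type (max u v w)) [L.Structure C] [T.Model C], ∀ f g : A →[L] C,
    (∀ b ∈ B, f b = g b) → f a = g a}

/-- Suppose `W` can be written as a composite of terms
`W(x) = W'(W''((x_s)_{s ∈ t}), (x_s)_{s ∈ S ∖ t})`, where `W''` is a term in the
variables of `t` and `W'` is a term in one distinguished variable (here `Sum.inl ()`)
together with the variables of `S ∖ t`, and suppose `W''` evaluated in `A` at the
`t`-tuple `(x_s)_{s ∈ t}` gives an element of `B`. Then `t` is transferable over `B`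
with respect to `W(x)`. -/
theorem transferable_of_inner_mem {L : FirstOrder.Language.{u, v}} (T : L.Theory)
    {A : Type w} [L.Structure A] [T.Model A] (B : L.Substructure A) {S : Type x}
    (W : L.Term S) (xs : S → A) (t : Set S)
    (W'' : L.Term {s : S // s ∈ t}) (W' : L.Term (Unit ⊕ {s : S // s ∉ t}))
    (hcomp : W = W'.subst (Sum.elim
      (fun _ : Unit => W''.relabel (fun s : {s : S // s ∈ t} => (s : S)))
      (fun s : {s : S // s ∉ t} => Term.var (s : S))))
    (hmem : W''.realize (fun s : {s : S // s ∈ t} => xs (s : S)) ∈ B) :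
    Transferable T B W xs t := by
  classical
  intro S₁ S₂ hd1 hd2 hd3 hu C _ _ f g hfg
  subst hcomp
  simp only [Term.realize_subst]
  apply congrArg (fun v => Term.realize v W')
  funext a
  rcases a with u | s
  · simp only [Sum.elim_inl, Term.realize_relabel]
    have e1 : ((fun s => if s ∈ S₁ ∪ t then f (xs s) else g (xs s)) ∘
        fun s : {s : S // s ∈ t} => (s : S)) = f ∘ (fun s : {s : S // s ∈ t} => xs (s : S)) := by
      funext s
      simp [Set.mem_union, s.2]
    have e2 : ((fun s => if s ∈ S₁ then f (xs s) else g (xs s)) ∘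
        fun s : {s : S // s ∈ t} => (s : S)) = g ∘ (fun s : {s : S // s ∈ t} => xs (s : S)) := by
      funext s
      have : (s : S) ∉ S₁ := fun h => hd1.ne_of_mem h s.2 rfl
      simp [this]
    rw [e1, e2, HomClass.realize_term, HomClass.realize_term]
    exact hfg _ hmem
  · simp only [Sum.elim_inr, Term.realize_var]
    have : (s : S) ∈ S₁ ∪ t ↔ (s : S) ∈ S₁ := by
      simp [Set.mem_union, s.2]
    simp [this]
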